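/- (Iteration lemma.) Let ρ > 1, let 0 < s < p < q < ∞ and θ ∈ (0, 1) satisfy 1/p = θ/q + (1 − θ)/s, let C > 0, A > 0, w ≥ 0, and let (w_k)_{k∈ℤ} be nonnegative real numbers. Assume: (i) for every k ∈ ℤ the truncation f_{ρ,k} satisfies ‖f_{ρ,k}‖_p ≤ (C w_k)^θ ‖f_{ρ,k}‖_s^{1−θ}; and (ii) Σ_{k∈ℤ} w_k^p ≤ (A w)^p. Then ‖f‖_q ≤ (ρ^q − 1)^{1/q} · ρ^{(q−s)/(p−s)} · (C A/(ρ − 1)) · w. -/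

import Mathlib

open MeasureTheory ENNReal

set_option maxHeartbeats 2000000

/-- (Iteration lemma.) Let `ρ > 1`, `0 < s < p < q < ∞` and `θ ∈ (0, 1)`
with `1/p = θ/q + (1 − θ)/s`, let `C > 0`, `A > 0`, `w ≥ 0` (`w = W(f)`), and let
`(w_k)_{k∈ℤ}` be nonnegative (`w_k = W(f_{ρ,k})`).  Assume:
(i) for every `k ∈ ℤ` the truncation `f_{ρ,k} := min((f − ρ^k)⁺, ρ^k(ρ − 1))` satisfies
`‖f_{ρ,k}‖_p ≤ (C w_k)^θ ‖f_{ρ,k}‖_s^{1−θ}`; and (ii) `Σ_k w_k^p ≤ (A w)^p`.  Then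
`‖f‖_q ≤ (ρ^q − 1)^{1/q} ρ^{(q−s)/(p−s)} (C A/(ρ − 1)) w`, where `‖f‖_r := (∫ f^r dμ)^{1/r}`. -/
theorem stmt10 {M : Type*} [MeasurableSpace M] (μ : Measure M) [SigmaFinite μ]
    (f : M → ℝ) (hfm : Measurable f) (hf0 : ∀ x, 0 ≤ f x)
    (hfLp : ∀ r : ℝ, 0 < r → Integrable (fun x => f x ^ r) μ)
    (ρ : ℝ) (hρ : 1 < ρ) (s p q θ C A : ℝ)
    (hs : 0 < s) (hsp : s < p) (hpq : p < q)
    (hθ0 : 0 < θ) (hθ1 : θ < 1) (hrel : 1 / p = θ / q + (1 - θ) / s)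
    (hC : 0 < C) (hA : 0 < A) (w : ℝ) (hw0 : 0 ≤ w)
    (wk : ℤ → ℝ) (hwk : ∀ k, 0 ≤ wk k)
    (hSob : ∀ k : ℤ,
      (∫ x, (min (max (f x - ρ ^ k) 0) (ρ ^ k * (ρ - 1))) ^ p ∂μ) ^ (1 / p) ≤
        (C * wk k) ^ θ *
          ((∫ x, (min (max (f x - ρ ^ k) 0) (ρ ^ k * (ρ - 1))) ^ s ∂μ) ^ (1 / s)) ^ (1 - θ))
    (hsum : (∑' k : ℤ, ENNReal.ofReal (wk k ^ p)) ≤ ENNReal.ofReal ((A * w) ^ p)) :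
    (∫ x, f x ^ q ∂μ) ^ (1 / q) ≤
      (ρ ^ q - 1) ^ (1 / q) * ρ ^ ((q - s) / (p - s)) * (C * A / (ρ - 1)) * w := by
  -- basic positivity facts
  have hp : (0:ℝ) < p := hs.trans hsp
  have hq : (0:ℝ) < q := hp.trans hpq
  have hρ0 : (0:ℝ) < ρ := one_pos.trans hρ
  have hρ1 : (0:ℝ) < ρ - 1 := sub_pos.2 hρ
  have hrk : ∀ k : ℤ, (0:ℝ) < ρ ^ k := fun k => zpow_pos hρ0 k
  have hRq1 : (1:ℝ) < ρ ^ q := by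
    rw [Real.one_lt_rpow_iff_of_pos hρ0]; exact Or.inl ⟨hρ, hq⟩
  -- the exponent β
  set β : ℝ := θ * p / q with hβdef
  have hβ0 : 0 < β := by rw [hβdef]; positivity
  have hβ1 : β < 1 := by
    rw [hβdef, div_lt_one hq]; nlinarith
  have h1mβ0 : 0 < 1 - β := by linarith
  have hkey : θ * p * (q - s) = q * (p - s) := by
    have hp' : p ≠ 0 := hp.ne'
    have hq' : q ≠ 0 := hq.ne'
    have hs' : s ≠ 0 := hs.ne'
    field_simp at hrel
    nlinarith [hrel]
  have h1mβ : (1 - θ) * p / s = 1 - β := by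
    rw [hβdef]
    field_simp
    nlinarith [hkey]
  -- the truncations
  set G : ℤ → M → ℝ := fun k x => min (max (f x - ρ ^ k) 0) (ρ ^ k * (ρ - 1)) with hGdef
  have hSob' : ∀ k : ℤ, (∫ x, G k x ^ p ∂μ) ^ (1 / p) ≤
      (C * wk k) ^ θ * ((∫ x, G k x ^ s ∂μ) ^ (1 / s)) ^ (1 - θ) := hSob
  -- the superlevel sets
  set E : ℤ → Set M := fun k => {y | ρ ^ k < f y} with hEdef
  have hEm : ∀ k, MeasurableSet (E k) := fun k => measurableSet_lt measurable_const hfm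
  have hEfin : ∀ k, μ (E k) ≠ ⊤ := by
    intro k
    have h1 : μ (E k) ≤ μ {y | (ρ ^ k) ^ s ≤ f y ^ s} := by
      apply measure_mono
      intro y hy
      exact Real.rpow_le_rpow (hrk k).le (le_of_lt hy) hs.le
    exact (lt_of_le_of_lt h1 ((hfLp s hs).measure_ge_lt_top (by positivity))).ne
  set a : ℤ → ℝ := fun k => (μ (E k)).toReal with hadef
  have ha0 : ∀ k, 0 ≤ a k := fun k => ENNReal.toReal_nonneg
  -- Chebyshev
  have cheb : ∀ (k : ℤ) (r : ℝ), 0 < r → (ρ ^ k) ^ r * a k ≤ ∫ x, f x ^ r ∂μ := by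
    intro k r hr
    have hint := hfLp r hr
    have h2 : (ρ ^ k) ^ r * a k ≤ ∫ x in E k, f x ^ r ∂μ := by
      have hc : ∫ _x in E k, (ρ ^ k) ^ r ∂μ = (μ (E k)).toReal • (ρ ^ k) ^ r :=
        setIntegral_const _
      have h3 : (ρ ^ k) ^ r * a k = ∫ _x in E k, (ρ ^ k) ^ r ∂μ := by
        rw [hc, hadef]; simp [smul_eq_mul, mul_comm]
      rw [h3]
      apply setIntegral_mono_on
        (integrableOn_const (hEfin k))
        hint.integrableOn (hEm k)
      intro y hy
      exact Real.rpow_le_rpow (hrk k).le (le_of_lt hy) hr.le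
    exact h2.trans (setIntegral_le_integral hint
      (Filter.Eventually.of_forall fun y => Real.rpow_nonneg (hf0 y) r))
  -- truncation facts
  have hG0 : ∀ k x, 0 ≤ G k x := fun k x => le_min (le_max_right _ _) (by positivity)
  have hGf : ∀ k x, G k x ≤ f x := by
    intro k x
    refine (min_le_left _ _).trans (max_le (by linarith [(hrk k).le]) (hf0 x))
  have hGc : ∀ k x, G k x ≤ ρ ^ k * (ρ - 1) := fun k x => min_le_right _ _
  have hGm : ∀ k, Measurable (G k) :=
    fun k => ((hfm.sub measurable_const).max measurable_const).min measurable_const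
  have hGeq : ∀ k x, x ∈ E (k + 1) → G k x = ρ ^ k * (ρ - 1) := by
    intro k x hx
    simp only [hEdef, Set.mem_setOf_eq] at hx
    have h1 : ρ ^ (k + 1) = ρ ^ k * ρ := zpow_add_one₀ hρ0.ne' k
    have h2 : ρ ^ k * (ρ - 1) ≤ f x - ρ ^ k := by nlinarith [hrk k]
    exact min_eq_right (le_max_of_le_left h2)
  have hGzero : ∀ k x, x ∉ E k → G k x = 0 := by
    intro k x hx
    simp only [hEdef, Set.mem_setOf_eq, not_lt] at hx
    simp only [hGdef]
    rw [max_eq_right (by linarith), min_eq_left (by positivity)]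
  have Gint : ∀ (k : ℤ) (r : ℝ), 0 < r → Integrable (fun x => G k x ^ r) μ := by
    intro k r hr
    refine (hfLp r hr).mono (Measurable.aestronglyMeasurable (by fun_prop : Measurable fun x => G k x ^ r)) ?_
    refine Filter.Eventually.of_forall fun x => ?_
    rw [Real.norm_eq_abs, Real.norm_eq_abs, abs_of_nonneg (Real.rpow_nonneg (hG0 k x) r),
      abs_of_nonneg (Real.rpow_nonneg (hf0 x) r)]
    exact Real.rpow_le_rpow (hG0 k x) (hGf k x) hr.le
  -- lower bound for the p-integral of the truncation
  have low : ∀ k : ℤ, (ρ ^ k * (ρ - 1)) ^ p * a (k + 1) ≤ ∫ x, G k x ^ p ∂μ := by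
    intro k
    have h1 : (ρ ^ k * (ρ - 1)) ^ p * a (k + 1) = ∫ _x in E (k + 1), (ρ ^ k * (ρ - 1)) ^ p ∂μ := by
      rw [setIntegral_const, hadef]; simp [smul_eq_mul, mul_comm, Measure.real]
    rw [h1]
    have h2 : ∫ _x in E (k + 1), (ρ ^ k * (ρ - 1)) ^ p ∂μ ≤ ∫ x in E (k + 1), G k x ^ p ∂μ := by
      apply setIntegral_mono_on
        (integrableOn_const (hEfin _))
        (Gint k p hp).integrableOn (hEm _)
      intro x hx
      rw [hGeq k x hx]
    exact h2.trans (setIntegral_le_integral (Gint k p hp)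
      (Filter.Eventually.of_forall fun x => Real.rpow_nonneg (hG0 k x) p))
  -- upper bound for the s-integral of the truncation
  have hup : ∀ k : ℤ, ∫ x, G k x ^ s ∂μ ≤ (ρ ^ k * (ρ - 1)) ^ s * a k := by
    intro k
    have h1 : ∀ x, G k x ^ s ≤ (E k).indicator (fun _ => (ρ ^ k * (ρ - 1)) ^ s) x := by
      intro x
      by_cases hx : x ∈ E k
      · rw [Set.indicator_of_mem hx]
        exact Real.rpow_le_rpow (hG0 k x) (hGc k x) hs.le
      · rw [Set.indicator_of_notMem hx, hGzero k x hx, Real.zero_rpow hs.ne']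
    have h2 : ∫ x, (E k).indicator (fun _ => (ρ ^ k * (ρ - 1)) ^ s) x ∂μ
        = (ρ ^ k * (ρ - 1)) ^ s * a k := by
      rw [integral_indicator_const _ (hEm k), hadef]; simp [smul_eq_mul, mul_comm, Measure.real]
    calc ∫ x, G k x ^ s ∂μ
        ≤ ∫ x, (E k).indicator (fun _ => (ρ ^ k * (ρ - 1)) ^ s) x ∂μ :=
          integral_mono (Gint k s hs)
            ((integrable_indicator_iff (hEm k)).2
              (integrableOn_const (hEfin k))) h1
      _ = _ := h2
  -- the key recursion, real form
  set X : ℤ → ℝ := fun k => (ρ ^ k) ^ q * a k with hXdef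
  have hX0 : ∀ k, 0 ≤ X k := fun k => mul_nonneg (Real.rpow_nonneg (hrk k).le q) (ha0 k)
  set cR : ℤ → ℝ := fun k => (C * wk k / (ρ - 1)) ^ q with hcRdef
  have hcR0 : ∀ k, 0 ≤ cR k := by
    intro k
    rw [hcRdef]
    exact Real.rpow_nonneg (div_nonneg (mul_nonneg hC.le (hwk k)) hρ1.le) q
  have keyX : ∀ k : ℤ, X (k + 1) ≤ ρ ^ q * cR k ^ β * X k ^ (1 - β) := by
    intro k
    have hu0 : 0 ≤ C * wk k := mul_nonneg hC.le (hwk k)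
    set m : ℝ := ρ ^ k * (ρ - 1) with hmdef
    have hm0 : 0 < m := by rw [hmdef]; positivity
    -- step A
    have hA : m * a (k + 1) ^ (1 / p) ≤ (∫ x, G k x ^ p ∂μ) ^ (1 / p) := by
      have e1 : (m ^ p) ^ (1 / p) = m := by
        rw [← Real.rpow_mul hm0.le, mul_one_div_cancel hp.ne', Real.rpow_one]
      calc m * a (k + 1) ^ (1 / p) = (m ^ p * a (k + 1)) ^ (1 / p) := by
            rw [Real.mul_rpow (Real.rpow_nonneg hm0.le p) (ha0 _), e1]
        _ ≤ _ := Real.rpow_le_rpow (by positivity) (low k) (by positivity)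
    -- step B
    have hB : (∫ x, G k x ^ s ∂μ) ^ (1 / s) ≤ m * a k ^ (1 / s) := by
      have e1 : (m ^ s) ^ (1 / s) = m := by
        rw [← Real.rpow_mul hm0.le, mul_one_div_cancel hs.ne', Real.rpow_one]
      have h := Real.rpow_le_rpow
        (integral_nonneg fun x => Real.rpow_nonneg (hG0 k x) s) (hup k)
        (by positivity : (0:ℝ) ≤ 1 / s)
      rwa [Real.mul_rpow (Real.rpow_nonneg hm0.le s) (ha0 _), e1] at h
    -- step C
    have hintGs : 0 ≤ ∫ x, G k x ^ s ∂μ := integral_nonneg fun x => Real.rpow_nonneg (hG0 k x) s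
    have hC3 : m * a (k + 1) ^ (1 / p)
        ≤ (C * wk k) ^ θ * (m ^ (1 - θ) * a k ^ ((1 - θ) / s)) := by
      have hrhs : (m * a k ^ (1 / s)) ^ (1 - θ) = m ^ (1 - θ) * a k ^ ((1 - θ) / s) := by
        rw [Real.mul_rpow hm0.le (Real.rpow_nonneg (ha0 _) _), ← Real.rpow_mul (ha0 _)]
        ring_nf
      have hBθ : ((∫ x, G k x ^ s ∂μ) ^ (1 / s)) ^ (1 - θ) ≤ (m * a k ^ (1 / s)) ^ (1 - θ) :=
        Real.rpow_le_rpow (Real.rpow_nonneg hintGs _) hB (by linarith)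
      refine hA.trans ((hSob' k).trans ?_)
      rw [← hrhs]
      exact mul_le_mul_of_nonneg_left hBθ (Real.rpow_nonneg hu0 θ)
    -- step D : divide by m
    have hstep : a (k + 1) ^ (1 / p) ≤ (C * wk k) ^ θ * m ^ (-θ) * a k ^ ((1 - θ) / s) := by
      have hm1 : m ^ (1 - θ:ℝ) = m ^ (-θ:ℝ) * m := by
        rw [show (1 - θ : ℝ) = -θ + 1 by ring, Real.rpow_add_one hm0.ne']
      have hC4 : m * (a (k + 1) ^ (1 / p))
          ≤ m * ((C * wk k) ^ θ * m ^ (-θ) * a k ^ ((1 - θ) / s)) := by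
        calc m * (a (k + 1) ^ (1 / p))
            ≤ (C * wk k) ^ θ * (m ^ (1 - θ) * a k ^ ((1 - θ) / s)) := hC3
          _ = m * ((C * wk k) ^ θ * m ^ (-θ) * a k ^ ((1 - θ) / s)) := by rw [hm1]; ring
      exact le_of_mul_le_mul_left hC4 hm0
    -- raise to the power p
    have hD : a (k + 1) ≤ (C * wk k) ^ (θ * p) * m ^ (-(θ * p)) * a k ^ (1 - β) := by
      have h := Real.rpow_le_rpow (Real.rpow_nonneg (ha0 _) _) hstep hp.le
      rw [← Real.rpow_mul (ha0 _), one_div, inv_mul_cancel₀ hp.ne', Real.rpow_one] at h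
      have hexp : ((C * wk k) ^ θ * m ^ (-θ) * a k ^ ((1 - θ) / s)) ^ p
          = (C * wk k) ^ (θ * p) * m ^ (-(θ * p)) * a k ^ (1 - β) := by
        rw [Real.mul_rpow (mul_nonneg (Real.rpow_nonneg hu0 _) (Real.rpow_nonneg hm0.le _))
            (Real.rpow_nonneg (ha0 _) _),
          Real.mul_rpow (Real.rpow_nonneg hu0 _) (Real.rpow_nonneg hm0.le _),
          ← Real.rpow_mul hu0, ← Real.rpow_mul hm0.le, ← Real.rpow_mul (ha0 _)]
        rw [show -θ * p = -(θ * p) by ring,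
          show (1 - θ) / s * p = 1 - β from by rw [← h1mβ]; ring]
      rwa [hexp] at h
    -- coefficient juggling
    have hcoef : (ρ ^ (k + 1) : ℝ) ^ q * ((C * wk k) ^ (θ * p) * m ^ (-(θ * p)))
        = ρ ^ q * (cR k) ^ β * ((ρ ^ k) ^ q) ^ (1 - β) := by
      have e1 : (ρ ^ (k + 1) : ℝ) ^ q = ρ ^ q * (ρ ^ k) ^ q := by
        rw [zpow_add_one₀ hρ0.ne' k, Real.mul_rpow (hrk k).le hρ0.le]; ring
      have e2 : m ^ (-(θ * p)) = (ρ ^ k) ^ (-(θ * p)) * (ρ - 1) ^ (-(θ * p)) := by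
        rw [hmdef, Real.mul_rpow (hrk k).le hρ1.le]
      have e3 : (cR k) ^ β = (C * wk k) ^ (θ * p) * (ρ - 1) ^ (-(θ * p)) := by
        rw [hcRdef]
        rw [← Real.rpow_mul (by positivity),
          show q * β = θ * p from by rw [hβdef]; field_simp,
          Real.div_rpow hu0 hρ1.le, Real.rpow_neg hρ1.le, div_eq_mul_inv]
      have e4 : ((ρ ^ k : ℝ) ^ q) ^ (1 - β) = (ρ ^ k) ^ q * (ρ ^ k) ^ (-(θ * p)) := by
        rw [← Real.rpow_mul (hrk k).le, ← Real.rpow_add (hrk k)]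
        congr 1
        rw [hβdef]; field_simp; ring
      rw [e1, e2, e3, e4]; ring
    have hXsplit : (ρ ^ (k + 1) : ℝ) ^ q * a (k + 1) ≤
        (ρ ^ (k + 1)) ^ q * ((C * wk k) ^ (θ * p) * m ^ (-(θ * p)) * a k ^ (1 - β)) :=
      mul_le_mul_of_nonneg_left hD (Real.rpow_nonneg (hrk _).le q)
    calc X (k + 1) = (ρ ^ (k + 1) : ℝ) ^ q * a (k + 1) := rfl
      _ ≤ (ρ ^ (k + 1)) ^ q * ((C * wk k) ^ (θ * p) * m ^ (-(θ * p)) * a k ^ (1 - β)) := hXsplit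
      _ = ρ ^ q * cR k ^ β * X k ^ (1 - β) := by
          rw [hXdef]
          simp only
          rw [Real.mul_rpow (Real.rpow_nonneg (hrk k).le q) (ha0 k)]
          linear_combination (a k ^ (1 - β)) * hcoef
  -- pass to ENNReal
  set xE : ℤ → ℝ≥0∞ := fun k => ENNReal.ofReal (X k) with hxEdef
  set cE : ℤ → ℝ≥0∞ := fun k => ENNReal.ofReal (cR k) with hcEdef
  have xrec : ∀ k : ℤ, xE (k + 1) ≤ ENNReal.ofReal (ρ ^ q) * (cE k) ^ β * (xE k) ^ (1 - β) := by
    intro k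
    have h := ENNReal.ofReal_le_ofReal (keyX k)
    rwa [ENNReal.ofReal_mul (mul_nonneg (Real.rpow_nonneg hρ0.le q) (Real.rpow_nonneg (hcR0 k) β)),
      ENNReal.ofReal_mul (Real.rpow_nonneg hρ0.le q),
      ← ENNReal.ofReal_rpow_of_nonneg (hcR0 k) hβ0.le,
      ← ENNReal.ofReal_rpow_of_nonneg (hX0 k) h1mβ0.le] at h
  -- finiteness of the sum
  have hI1 : 0 ≤ ∫ x, f x ^ (q + 1) ∂μ := integral_nonneg fun x => Real.rpow_nonneg (hf0 x) _
  have hI2 : 0 ≤ ∫ x, f x ^ s ∂μ := integral_nonneg fun x => Real.rpow_nonneg (hf0 x) _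
  have hxnat : ∀ n : ℕ, xE n ≤ ENNReal.ofReal ((∫ x, f x ^ (q + 1) ∂μ) * (ρ⁻¹) ^ n) := by
    intro n
    apply ENNReal.ofReal_le_ofReal
    have hpow : ((ρ:ℝ)⁻¹) ^ n * (ρ:ℝ) ^ (n:ℤ) = 1 := by
      rw [zpow_natCast, inv_pow, inv_mul_cancel₀ (by positivity)]
    have h2 : X n * ρ ^ (n:ℤ) ≤ ∫ x, f x ^ (q + 1) ∂μ := by
      have hc := cheb n (q + 1) (by positivity)
      calc X n * ρ ^ (n:ℤ) = (ρ ^ (n:ℤ)) ^ (q + 1) * a n := by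
            rw [hXdef]; simp only
            rw [Real.rpow_add_one (hrk n).ne']; ring
        _ ≤ _ := hc
    calc X n = X n * ρ ^ (n:ℤ) * (ρ⁻¹) ^ n := by
          rw [mul_assoc, mul_comm ((ρ:ℝ) ^ (n:ℤ)), hpow, mul_one]
      _ ≤ (∫ x, f x ^ (q + 1) ∂μ) * (ρ⁻¹) ^ n :=
          mul_le_mul_of_nonneg_right h2 (by positivity)
  have hxneg : ∀ n : ℕ,
      xE (-(n + 1)) ≤ ENNReal.ofReal ((∫ x, f x ^ s ∂μ) * ((ρ⁻¹) ^ (q - s)) ^ n) := by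
    intro n
    apply ENNReal.ofReal_le_ofReal
    set k : ℤ := -(n + 1) with hkdef
    have h1 : X k ≤ (ρ ^ k) ^ (q - s) * ∫ x, f x ^ s ∂μ := by
      have hc := cheb k s hs
      calc X k = (ρ ^ k) ^ (q - s) * ((ρ ^ k) ^ s * a k) := by
            rw [hXdef]; simp only
            rw [← mul_assoc, ← Real.rpow_add (hrk k)]; ring_nf
        _ ≤ _ := mul_le_mul_of_nonneg_left hc (Real.rpow_nonneg (hrk k).le _)
    have h2 : (ρ ^ k : ℝ) ^ (q - s) ≤ ((ρ⁻¹) ^ (q - s)) ^ n := by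
      have e1 : (ρ ^ k : ℝ) ^ (q - s) = ((ρ⁻¹) ^ (q - s)) ^ (n + 1) := by
        rw [hkdef]
        rw [show ((-(n + 1) : ℤ)) = -((n:ℤ) + 1) by push_cast; ring]
        rw [zpow_neg, ← inv_zpow, show ((n:ℤ) + 1) = ((n + 1 : ℕ) : ℤ) by push_cast; ring,
          zpow_natCast]
        rw [← Real.rpow_natCast ((ρ:ℝ)⁻¹) (n + 1), ← Real.rpow_mul (by positivity),
          mul_comm, Real.rpow_mul (by positivity), Real.rpow_natCast]
      rw [e1, pow_succ]
      have hr1 : ((ρ:ℝ)⁻¹) ^ (q - s) ≤ 1 :=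
        Real.rpow_le_one (by positivity) (inv_le_one_of_one_le₀ hρ.le) (by linarith)
      have hr0 : 0 ≤ ((ρ:ℝ)⁻¹) ^ (q - s) := Real.rpow_nonneg (by positivity) _
      nlinarith [pow_nonneg hr0 n]
    calc X k ≤ (ρ ^ k) ^ (q - s) * ∫ x, f x ^ s ∂μ := h1
      _ ≤ ((ρ⁻¹) ^ (q - s)) ^ n * ∫ x, f x ^ s ∂μ := mul_le_mul_of_nonneg_right h2 hI2
      _ = (∫ x, f x ^ s ∂μ) * ((ρ⁻¹) ^ (q - s)) ^ n := by ring
  have hSnat : (∑' n : ℕ, xE n) ≠ ⊤ := by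
    have hsum1 : Summable (fun n : ℕ => (∫ x, f x ^ (q + 1) ∂μ) * (ρ⁻¹) ^ n) :=
      (summable_geometric_of_lt_one (by positivity) (inv_lt_one_of_one_lt₀ hρ)).mul_left _
    have h := Summable.tsum_le_tsum hxnat ENNReal.summable ENNReal.summable
    rw [← ENNReal.ofReal_tsum_of_nonneg (fun n => mul_nonneg hI1 (by positivity)) hsum1] at h
    exact ne_top_of_le_ne_top ENNReal.ofReal_ne_top h
  have hSneg : (∑' n : ℕ, xE (-(n + 1))) ≠ ⊤ := by
    have hrlt : ((ρ:ℝ)⁻¹) ^ (q - s) < 1 :=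
      Real.rpow_lt_one (by positivity) (inv_lt_one_of_one_lt₀ hρ) (by linarith)
    have hsum1 : Summable (fun n : ℕ => (∫ x, f x ^ s ∂μ) * ((ρ⁻¹) ^ (q - s)) ^ n) :=
      (summable_geometric_of_lt_one (Real.rpow_nonneg (by positivity) _) hrlt).mul_left _
    have h := Summable.tsum_le_tsum hxneg ENNReal.summable ENNReal.summable
    rw [← ENNReal.ofReal_tsum_of_nonneg
      (fun n => mul_nonneg hI2 (pow_nonneg (Real.rpow_nonneg (by positivity) _) n)) hsum1] at h
    exact ne_top_of_le_ne_top ENNReal.ofReal_ne_top h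
  have hSfin : (∑' k : ℤ, xE k) ≠ ⊤ := by
    rw [tsum_of_nat_of_neg_add_one ENNReal.summable ENNReal.summable]
    exact ENNReal.add_ne_top.2 ⟨hSnat, hSneg⟩
  -- reindexing
  have Seq : ∑' k : ℤ, xE (k + 1) = ∑' k : ℤ, xE k := by
    simpa using (Equiv.addRight (1:ℤ)).tsum_eq xE
  -- Hölder
  have hconj : Real.HolderConjugate (1 / β) (1 / (1 - β)) := by
    rw [Real.holderConjugate_iff]
    constructor
    · rw [lt_div_iff₀ hβ0, one_mul]; exact hβ1
    · rw [one_div, one_div, inv_inv, inv_inv]; ring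
  have holder : (∑' k : ℤ, (cE k) ^ β * (xE k) ^ (1 - β))
      ≤ (∑' k : ℤ, cE k) ^ β * (∑' k : ℤ, xE k) ^ (1 - β) := by
    have h := ENNReal.lintegral_mul_le_Lp_mul_Lq (Measure.count : Measure ℤ) hconj
      (f := fun k => (cE k) ^ β) (g := fun k => (xE k) ^ (1 - β))
      (Measurable.of_discrete.aemeasurable) (Measurable.of_discrete.aemeasurable)
    simp only [Pi.mul_apply] at h
    rw [lintegral_count, lintegral_count, lintegral_count] at h
    have e1 : ∀ k : ℤ, ((cE k) ^ β) ^ (1 / β) = cE k := fun k => by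
      rw [← ENNReal.rpow_mul, mul_one_div_cancel hβ0.ne', ENNReal.rpow_one]
    have e2 : ∀ k : ℤ, ((xE k) ^ (1 - β)) ^ (1 / (1 - β)) = xE k := fun k => by
      rw [← ENNReal.rpow_mul, mul_one_div_cancel h1mβ0.ne', ENNReal.rpow_one]
    simp only [e1, e2, one_div_one_div] at h
    exact h
  -- the main inequality for S
  have main : (∑' k : ℤ, xE k) ≤
      ENNReal.ofReal (ρ ^ q) * (∑' k : ℤ, cE k) ^ β * (∑' k : ℤ, xE k) ^ (1 - β) := by
    calc (∑' k : ℤ, xE k) = ∑' k : ℤ, xE (k + 1) := Seq.symm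
      _ ≤ ∑' k : ℤ, ENNReal.ofReal (ρ ^ q) * ((cE k) ^ β * (xE k) ^ (1 - β)) :=
          Summable.tsum_le_tsum (fun k => by rw [← mul_assoc]; exact xrec k)
            ENNReal.summable ENNReal.summable
      _ = ENNReal.ofReal (ρ ^ q) * ∑' k : ℤ, (cE k) ^ β * (xE k) ^ (1 - β) :=
          ENNReal.tsum_mul_left
      _ ≤ _ := by rw [mul_assoc]; exact mul_le_mul_right holder _
  -- bound on T
  have hTle : (∑' k : ℤ, cE k) ≤ ENNReal.ofReal ((C * A * w / (ρ - 1)) ^ q) := by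
    have hcv : ∀ k : ℤ, cE k
        = ENNReal.ofReal ((C / (ρ - 1)) ^ q) * (ENNReal.ofReal (wk k ^ p)) ^ (q / p) := by
      intro k
      have e1 : (C * wk k / (ρ - 1)) ^ q = (C / (ρ - 1)) ^ q * (wk k) ^ q := by
        rw [show C * wk k / (ρ - 1) = (C / (ρ - 1)) * wk k by ring,
          Real.mul_rpow (by positivity) (hwk k)]
      have e2 : (wk k : ℝ) ^ q = (wk k ^ p) ^ (q / p) := by
        rw [← Real.rpow_mul (hwk k)]
        congr 1
        field_simp
      rw [hcEdef]
      simp only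
      rw [hcRdef]
      simp only
      rw [e1, e2, ENNReal.ofReal_mul (by positivity),
        ← ENNReal.ofReal_rpow_of_nonneg (Real.rpow_nonneg (hwk k) p) (by positivity)]
    have hVfin : (∑' k : ℤ, ENNReal.ofReal (wk k ^ p)) ≠ ⊤ :=
      ne_top_of_le_ne_top ENNReal.ofReal_ne_top hsum
    have hqp1 : (1:ℝ) ≤ q / p := le_of_lt ((one_lt_div hp).2 hpq)
    have hpow : (∑' k : ℤ, (ENNReal.ofReal (wk k ^ p)) ^ (q / p))
        ≤ (∑' k : ℤ, ENNReal.ofReal (wk k ^ p)) ^ (q / p) := by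
      set V := ∑' k : ℤ, ENNReal.ofReal (wk k ^ p) with hVdef
      rcases eq_or_ne V 0 with h0 | h0
      · have hz : ∀ k : ℤ, ENNReal.ofReal (wk k ^ p) = 0 := ENNReal.tsum_eq_zero.mp h0
        simp only [hz]
        rw [ENNReal.zero_rpow_of_pos (by positivity), h0,
          ENNReal.zero_rpow_of_pos (by positivity)]
        simp
      · calc (∑' k : ℤ, (ENNReal.ofReal (wk k ^ p)) ^ (q / p))
            ≤ ∑' k : ℤ, ENNReal.ofReal (wk k ^ p) * V ^ (q / p - 1) := by
              apply Summable.tsum_le_tsum _ ENNReal.summable ENNReal.summable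
              intro k
              rcases eq_or_ne (ENNReal.ofReal (wk k ^ p)) 0 with hk0 | hk0
              · rw [hk0, ENNReal.zero_rpow_of_pos (by positivity), zero_mul]
              · calc (ENNReal.ofReal (wk k ^ p)) ^ (q / p)
                    = ENNReal.ofReal (wk k ^ p) * (ENNReal.ofReal (wk k ^ p)) ^ (q / p - 1) := by
                      nth_rewrite 1 [show q / p = 1 + (q / p - 1) by ring]
                      rw [ENNReal.rpow_add _ _ hk0 ENNReal.ofReal_ne_top, ENNReal.rpow_one]
                  _ ≤ ENNReal.ofReal (wk k ^ p) * V ^ (q / p - 1) :=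
                      mul_le_mul_right (ENNReal.rpow_le_rpow (ENNReal.le_tsum k) (by linarith)) _
          _ = V * V ^ (q / p - 1) := ENNReal.tsum_mul_right
          _ = V ^ (q / p) := by
              nth_rewrite 2 [show q / p = 1 + (q / p - 1) by ring]
              rw [ENNReal.rpow_add _ _ h0 hVfin, ENNReal.rpow_one]
    calc (∑' k : ℤ, cE k)
        = ENNReal.ofReal ((C / (ρ - 1)) ^ q) * ∑' k : ℤ, (ENNReal.ofReal (wk k ^ p)) ^ (q / p) := by
          simp_rw [hcv]; rw [ENNReal.tsum_mul_left]
      _ ≤ ENNReal.ofReal ((C / (ρ - 1)) ^ q) * (ENNReal.ofReal ((A * w) ^ p)) ^ (q / p) := by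
          apply mul_le_mul_right
          exact hpow.trans (ENNReal.rpow_le_rpow hsum (by positivity))
      _ = ENNReal.ofReal ((C * A * w / (ρ - 1)) ^ q) := by
          rw [ENNReal.ofReal_rpow_of_nonneg (Real.rpow_nonneg (by positivity) p) (by positivity),
            ← ENNReal.ofReal_mul (Real.rpow_nonneg (by positivity) q)]
          congr 1
          rw [← Real.rpow_mul (by positivity), show p * (q / p) = q from by field_simp,
            ← Real.mul_rpow (by positivity) (by positivity)]
          congr 1
          ring
  -- extraction
  have hSle : (∑' k : ℤ, xE k)
      ≤ (ENNReal.ofReal (ρ ^ q)) ^ (1 / β) * ∑' k : ℤ, cE k := by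
    set S := ∑' k : ℤ, xE k with hSdef
    set T := ∑' k : ℤ, cE k with hTdef
    rcases eq_or_ne S 0 with h0 | h0
    · rw [h0]; exact zero_le
    · have hne0 : S ^ (1 - β) ≠ 0 :=
        (ENNReal.rpow_pos (pos_iff_ne_zero.2 h0) hSfin).ne'
      have hnetop : S ^ (1 - β) ≠ ⊤ := ENNReal.rpow_ne_top_of_nonneg h1mβ0.le hSfin
      have hSsplit : S = S ^ β * S ^ (1 - β) := by
        rw [← ENNReal.rpow_add _ _ h0 hSfin, show β + (1 - β) = 1 by ring, ENNReal.rpow_one]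
      have h2 : S ^ β * S ^ (1 - β) ≤ (ENNReal.ofReal (ρ ^ q) * T ^ β) * S ^ (1 - β) :=
        le_trans (le_of_eq hSsplit.symm) main
      have hKβ : S ^ β ≤ ENNReal.ofReal (ρ ^ q) * T ^ β :=
        (ENNReal.mul_le_mul_iff_left hne0 hnetop).mp h2
      have h3 := ENNReal.rpow_le_rpow hKβ (by positivity : (0:ℝ) ≤ 1 / β)
      rw [← ENNReal.rpow_mul, mul_one_div_cancel hβ0.ne', ENNReal.rpow_one] at h3
      refine h3.trans (le_of_eq ?_)
      rw [ENNReal.mul_rpow_of_nonneg _ _ (by positivity : (0:ℝ) ≤ 1 / β),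
        ← ENNReal.rpow_mul, mul_one_div_cancel hβ0.ne', ENNReal.rpow_one]
  -- layer-cake
  have ustep : ∀ j : ℤ, (ρ ^ (j + 1) : ℝ) ^ q = ρ ^ q * (ρ ^ j) ^ q := by
    intro j
    rw [zpow_add_one₀ hρ0.ne' j, Real.mul_rpow (hrk j).le hρ0.le]; ring
  have hpt : ∀ x0, ENNReal.ofReal (f x0 ^ q) ≤
      ∑' k : ℤ, (E k).indicator (fun _ => ENNReal.ofReal ((ρ ^ q - 1) * (ρ ^ k) ^ q)) x0 := by
    intro x0
    rcases (hf0 x0).eq_or_lt with h | h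
    · rw [← h, Real.zero_rpow hq.ne', ENNReal.ofReal_zero]; exact zero_le
    · obtain ⟨n, hn1, hn2⟩ := exists_mem_Ioc_zpow h hρ
      have hfq : ENNReal.ofReal (f x0 ^ q) ≤ ENNReal.ofReal ((ρ ^ (n + 1)) ^ q) :=
        ENNReal.ofReal_le_ofReal (Real.rpow_le_rpow h.le hn2 hq.le)
      refine hfq.trans ?_
      refine ENNReal.le_of_forall_pos_le_add fun ε hε _ => ?_
      have hρq : (0:ℝ) < (ρ⁻¹) ^ q := Real.rpow_pos_of_pos (by positivity) q
      obtain ⟨N, hN⟩ := exists_pow_lt_of_lt_one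
        (show (0:ℝ) < (ε : ℝ) / (ρ ^ n) ^ q by positivity)
        (show ((ρ:ℝ)⁻¹) ^ q < 1 from
          Real.rpow_lt_one (by positivity) (inv_lt_one_of_one_lt₀ hρ) hq)
      have hsmall : (ρ ^ (n - N : ℤ) : ℝ) ^ q < (ε : ℝ) := by
        have e : (ρ ^ (n - N : ℤ) : ℝ) ^ q = (ρ ^ n) ^ q * (((ρ:ℝ)⁻¹) ^ q) ^ N := by
          rw [zpow_sub₀ hρ0.ne', div_eq_mul_inv, ← inv_zpow, zpow_natCast,
            Real.mul_rpow (hrk n).le (by positivity)]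
          congr 1
          rw [← Real.rpow_natCast ((ρ:ℝ)⁻¹) N, ← Real.rpow_mul (by positivity),
            mul_comm, Real.rpow_mul (by positivity), Real.rpow_natCast]
        rw [e]
        calc (ρ ^ n : ℝ) ^ q * (((ρ:ℝ)⁻¹) ^ q) ^ N
            < (ρ ^ n) ^ q * ((ε : ℝ) / (ρ ^ n) ^ q) :=
              mul_lt_mul_of_pos_left hN (by positivity)
          _ = (ε : ℝ) := by field_simp
      have PS : ∀ N' : ℕ, ∑ j ∈ Finset.range (N' + 1), (ρ ^ q - 1) * (ρ ^ (n - j : ℤ)) ^ q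
          = (ρ ^ (n + 1)) ^ q - (ρ ^ (n - N' : ℤ)) ^ q := by
        intro N'
        induction N' with
        | zero =>
          rw [Finset.sum_range_one]
          push_cast
          rw [sub_zero, ustep n]
          ring
        | succ m ih =>
          rw [Finset.sum_range_succ, ih]
          have e : (ρ ^ ((n:ℤ) - (m:ℤ)) : ℝ) ^ q = ρ ^ q * (ρ ^ ((n:ℤ) - ((m:ℤ) + 1))) ^ q := by
            have h := ustep ((n:ℤ) - ((m:ℤ) + 1))
            rwa [show (n:ℤ) - ((m:ℤ) + 1) + 1 = (n:ℤ) - (m:ℤ) by ring] at h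
          push_cast
          push_cast at e
          linear_combination -e
      have emb : (∑ j ∈ Finset.range (N + 1),
            ENNReal.ofReal ((ρ ^ q - 1) * (ρ ^ (n - j : ℤ)) ^ q))
          ≤ ∑' k : ℤ, (E k).indicator
              (fun _ => ENNReal.ofReal ((ρ ^ q - 1) * (ρ ^ k) ^ q)) x0 := by
        have heq : ∀ j ∈ Finset.range (N + 1),
            ENNReal.ofReal ((ρ ^ q - 1) * (ρ ^ (n - j : ℤ)) ^ q)
            = (E ((n : ℤ) - j)).indicator
                (fun _ => ENNReal.ofReal ((ρ ^ q - 1) * (ρ ^ ((n:ℤ) - j)) ^ q)) x0 := by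
          intro j _
          rw [Set.indicator_of_mem]
          simp only [hEdef, Set.mem_setOf_eq]
          exact lt_of_le_of_lt (zpow_le_zpow_right₀ hρ.le (by omega : (n:ℤ) - j ≤ n)) hn1
        rw [Finset.sum_congr rfl heq]
        have hinj : Function.Injective (fun j : ℕ => (n : ℤ) - j) := by
          intro a b hab
          simp only at hab
          omega
        calc (∑ j ∈ Finset.range (N + 1), (E ((n:ℤ) - j)).indicator
              (fun _ => ENNReal.ofReal ((ρ ^ q - 1) * (ρ ^ ((n:ℤ) - j)) ^ q)) x0)
            = ∑ k ∈ (Finset.range (N + 1)).map ⟨fun j : ℕ => (n:ℤ) - j, hinj⟩,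
              (E k).indicator (fun _ => ENNReal.ofReal ((ρ ^ q - 1) * (ρ ^ k) ^ q)) x0 := by
              rw [Finset.sum_map]
              rfl
          _ ≤ _ := ENNReal.sum_le_tsum _
      have hterm0 : ∀ j : ℕ, (0:ℝ) ≤ (ρ ^ q - 1) * (ρ ^ (n - j : ℤ)) ^ q := fun j =>
        mul_nonneg (by linarith) (Real.rpow_nonneg (hrk _).le q)
      have h1 : (ρ ^ (n + 1) : ℝ) ^ q
          ≤ (∑ j ∈ Finset.range (N + 1), (ρ ^ q - 1) * (ρ ^ (n - j : ℤ)) ^ q) + (ε : ℝ) := by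
        rw [PS N]
        linarith [hsmall]
      calc ENNReal.ofReal ((ρ ^ (n + 1)) ^ q)
          ≤ ENNReal.ofReal ((∑ j ∈ Finset.range (N + 1),
              (ρ ^ q - 1) * (ρ ^ (n - j : ℤ)) ^ q) + (ε : ℝ)) :=
            ENNReal.ofReal_le_ofReal h1
        _ = (∑ j ∈ Finset.range (N + 1),
              ENNReal.ofReal ((ρ ^ q - 1) * (ρ ^ (n - j : ℤ)) ^ q)) + (ε : ℝ≥0∞) := by
            rw [ENNReal.ofReal_add (Finset.sum_nonneg fun j _ => hterm0 j) ε.coe_nonneg,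
              ENNReal.ofReal_sum_of_nonneg fun j _ => hterm0 j]
            congr 1
            exact ENNReal.ofReal_coe_nnreal
        _ ≤ _ := add_le_add emb le_rfl
  have lint : (∫⁻ x, ENNReal.ofReal (f x ^ q) ∂μ)
      ≤ ENNReal.ofReal (ρ ^ q - 1) * ∑' k : ℤ, xE k := by
    calc (∫⁻ x, ENNReal.ofReal (f x ^ q) ∂μ)
        ≤ ∫⁻ x, ∑' k : ℤ, (E k).indicator
            (fun _ => ENNReal.ofReal ((ρ ^ q - 1) * (ρ ^ k) ^ q)) x ∂μ := lintegral_mono hpt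
      _ = ∑' k : ℤ, ∫⁻ x, (E k).indicator
            (fun _ => ENNReal.ofReal ((ρ ^ q - 1) * (ρ ^ k) ^ q)) x ∂μ :=
          lintegral_tsum fun k => (measurable_const.indicator (hEm k)).aemeasurable
      _ = ∑' k : ℤ, ENNReal.ofReal (ρ ^ q - 1) * xE k := by
          refine tsum_congr fun k => ?_
          rw [lintegral_indicator_const (hEm k)]
          rw [hxEdef]
          simp only
          rw [hXdef]
          simp only
          rw [ENNReal.ofReal_mul (by linarith : (0:ℝ) ≤ ρ ^ q - 1),
            ENNReal.ofReal_mul (Real.rpow_nonneg (hrk k).le q), mul_assoc]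
          congr 1
          rw [ENNReal.ofReal_toReal (hEfin k)]
      _ = ENNReal.ofReal (ρ ^ q - 1) * ∑' k : ℤ, xE k := ENNReal.tsum_mul_left
  -- conversion back to real integrals
  have hIq : ∫ x, f x ^ q ∂μ = (∫⁻ x, ENNReal.ofReal (f x ^ q) ∂μ).toReal :=
    integral_eq_lintegral_of_nonneg_ae
      (Filter.Eventually.of_forall fun x => Real.rpow_nonneg (hf0 x) q)
      (hfLp q hq).aestronglyMeasurable
  set Z : ℝ := (ρ ^ q - 1) * (ρ ^ q) ^ (1 / β) * ((C * A * w / (ρ - 1)) ^ q) with hZdef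
  have hZ0 : 0 ≤ Z := by
    rw [hZdef]
    have h1 : (0:ℝ) ≤ ρ ^ q - 1 := by linarith
    exact mul_nonneg (mul_nonneg h1 (Real.rpow_nonneg (Real.rpow_nonneg hρ0.le q) _))
      (Real.rpow_nonneg (by positivity) q)
  have hle : ∫ x, f x ^ q ∂μ ≤ Z := by
    rw [hIq]
    apply ENNReal.toReal_le_of_le_ofReal hZ0
    calc (∫⁻ x, ENNReal.ofReal (f x ^ q) ∂μ)
        ≤ ENNReal.ofReal (ρ ^ q - 1) * ∑' k : ℤ, xE k := lint
      _ ≤ ENNReal.ofReal (ρ ^ q - 1) *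
            ((ENNReal.ofReal (ρ ^ q)) ^ (1 / β) * ∑' k : ℤ, cE k) := mul_le_mul_right hSle _
      _ ≤ ENNReal.ofReal (ρ ^ q - 1) *
            ((ENNReal.ofReal (ρ ^ q)) ^ (1 / β) * ENNReal.ofReal ((C * A * w / (ρ - 1)) ^ q)) :=
          mul_le_mul_right (mul_le_mul_right hTle _) _
      _ = ENNReal.ofReal Z := by
          rw [ENNReal.ofReal_rpow_of_nonneg (Real.rpow_nonneg hρ0.le q) (by positivity),
            ← ENNReal.ofReal_mul (Real.rpow_nonneg (Real.rpow_nonneg hρ0.le q) _),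
            ← ENNReal.ofReal_mul (by linarith : (0:ℝ) ≤ ρ ^ q - 1), hZdef]
          congr 1
          ring
  -- final algebra
  have hInt0 : 0 ≤ ∫ x, f x ^ q ∂μ := integral_nonneg fun x => Real.rpow_nonneg (hf0 x) q
  have hfinal : (∫ x, f x ^ q ∂μ) ^ (1 / q) ≤ Z ^ (1 / q) :=
    Real.rpow_le_rpow hInt0 hle (by positivity)
  refine hfinal.trans (le_of_eq ?_)
  have h1β : 1 / β = (q - s) / (p - s) := by
    have h1 : 1 / β = q / (θ * p) := by rw [hβdef, one_div_div]
    rw [h1, div_eq_div_iff (by positivity : (0:ℝ) < θ * p).ne' (by linarith : (0:ℝ) < p - s).ne']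
    linear_combination -hkey
  have h1 : (0:ℝ) ≤ ρ ^ q - 1 := by linarith
  rw [hZdef, Real.mul_rpow
      (mul_nonneg h1 (Real.rpow_nonneg (Real.rpow_nonneg hρ0.le q) _))
      (Real.rpow_nonneg (by positivity) q),
    Real.mul_rpow h1 (Real.rpow_nonneg (Real.rpow_nonneg hρ0.le q) _)]
  have e1 : (((ρ:ℝ) ^ q) ^ (1 / β)) ^ (1 / q) = ρ ^ ((q - s) / (p - s)) := by
    rw [← Real.rpow_mul (Real.rpow_nonneg hρ0.le q), ← Real.rpow_mul hρ0.le]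
    congr 1
    rw [show q * (1 / β * (1 / q)) = 1 / β from by field_simp, h1β]
  have e2 : ((C * A * w / (ρ - 1) : ℝ) ^ q) ^ (1 / q) = C * A * w / (ρ - 1) := by
    rw [← Real.rpow_mul (by positivity), mul_one_div_cancel hq.ne', Real.rpow_one]
  rw [e1, e2]
  ring
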